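/- Let μ_1,…,μ_N and ξ_L^{(1)},…,ξ_L^{(N−1)} be complex numbers and define the function ψ_L of the variables T_{k,i} by ψ_L = exp{ Σ_{k=1}^{N−1} Σ_{i=1}^{k} (μ_k − μ_{k+1}) T_{k,i} + Σ_{i=1}^{N−1} ξ_L^{(i)} Σ_{k=1}^{N−i} e^{T_{k+i,k} − T_{k+i−1,k}} } (with the convention T_{N,j} := 0). Then ψ_L is a Whittaker vector: for every i = 1,…,N−1 one has the pointwise identity E_{i+1,i} ψ_L = ξ_L^{(N−i)} · ψ_L, where E_{i+1,i} is the Gauss–Givental lowering operator. -/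

import Mathlib

noncomputable section

/-- Value of the variable `T_{k,i}` (1-based indices), with the convention that
`T_{k,i} = 0` whenever `(k,i)` does not satisfy `1 ≤ i ≤ k ≤ N-1`
(in particular `T_{N,i} = 0`). -/
def tv (N : ℕ) (T : (Fin N × Fin N) → ℝ) (k i : ℕ) : ℝ :=
  if h : 1 ≤ i ∧ i ≤ k ∧ k ≤ N - 1 then T (⟨k - 1, by omega⟩, ⟨i - 1, by omega⟩) else 0

/-- Partial derivative `∂f/∂T_{k,i}` (1-based indices), with the convention that it is
zero whenever `(k,i)` does not satisfy `1 ≤ i ≤ k ≤ N-1`. -/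
def pd (N : ℕ) (f : ((Fin N × Fin N) → ℝ) → ℂ) (k i : ℕ) (T : (Fin N × Fin N) → ℝ) : ℂ :=
  if h : 1 ≤ i ∧ i ≤ k ∧ k ≤ N - 1 then
    fderiv ℝ f T (Pi.single ((⟨k - 1, by omega⟩ : Fin N), (⟨i - 1, by omega⟩ : Fin N)) 1)
  else 0

/-- The Gauss–Givental Cartan operator `E_{i,i}`. -/
def Ed (N : ℕ) (μ : ℕ → ℂ) (i : ℕ) (f : ((Fin N × Fin N) → ℝ) → ℂ)
    (T : (Fin N × Fin N) → ℝ) : ℂ :=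
  μ i * f T + ∑ k ∈ Finset.Icc 1 (i - 1), pd N f (N + k - i) k T
    - ∑ k ∈ Finset.Icc i (N - 1), pd N f k i T

/-- The Gauss–Givental raising operator `E_{i,i+1}`. -/
def Er (N : ℕ) (i : ℕ) (f : ((Fin N × Fin N) → ℝ) → ℂ) (T : (Fin N × Fin N) → ℝ) : ℂ :=
  ∑ n ∈ Finset.Icc 1 i,
    (∑ k ∈ Finset.Icc n i, (Real.exp (tv N T (N + k - i) k - tv N T (N + k - i - 1) k) : ℂ)) *
      (pd N f (N + n - i - 1) n T - pd N f (N + n - i - 1) (n - 1) T)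

/-- The Gauss–Givental lowering operator `E_{i+1,i}`. -/
def El (N : ℕ) (μ : ℕ → ℂ) (i : ℕ) (f : ((Fin N × Fin N) → ℝ) → ℂ)
    (T : (Fin N × Fin N) → ℝ) : ℂ :=
  ∑ k ∈ Finset.Icc i (N - 1),
    (Real.exp (tv N T k i - tv N T (k + 1) (i + 1)) : ℂ) *
      ((μ i - μ (i + 1)) * f T + ∑ s ∈ Finset.Icc i k, (pd N f s (i + 1) T - pd N f s i T))

/-- The left Whittaker vector
`ψ_L = exp( Σ_{k=1}^{N−1} Σ_{i=1}^{k} (μ_k − μ_{k+1}) T_{k,i}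
          + Σ_{i=1}^{N−1} ξ_L^{(i)} Σ_{k=1}^{N−i} e^{T_{k+i,k} − T_{k+i−1,k}} )`. -/
def psiL (N : ℕ) (μ : ℕ → ℂ) (ξ : ℕ → ℂ) (T : (Fin N × Fin N) → ℝ) : ℂ :=
  Complex.exp
    (∑ k ∈ Finset.Icc 1 (N - 1), ∑ i ∈ Finset.Icc 1 k,
        (μ k - μ (k + 1)) * (tv N T k i : ℂ)
      + ∑ i ∈ Finset.Icc 1 (N - 1), ξ i *
        ∑ k ∈ Finset.Icc 1 (N - i), (Real.exp (tv N T (k + i) k - tv N T (k + i - 1) k) : ℂ))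

/-- Coordinate projection (or zero) as a continuous linear map. -/
def prj (N : ℕ) (k i : ℕ) : ((Fin N × Fin N) → ℝ) →L[ℝ] ℝ :=
  if h : 1 ≤ i ∧ i ≤ k ∧ k ≤ N - 1 then
    ContinuousLinearMap.proj (⟨k - 1, by omega⟩, ⟨i - 1, by omega⟩) else 0

lemma tv_eq_prj (N : ℕ) (T : (Fin N × Fin N) → ℝ) (k i : ℕ) :
    tv N T k i = prj N k i T := by
  unfold tv prj
  split <;> simp

lemma prj_single (N : ℕ) {s j : ℕ} (h : 1 ≤ j ∧ j ≤ s ∧ s ≤ N - 1) (k i : ℕ) :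
    prj N k i (Pi.single ((⟨s - 1, by omega⟩ : Fin N), (⟨j - 1, by omega⟩ : Fin N)) 1)
      = if k = s ∧ i = j then 1 else 0 := by
  unfold prj
  split
  · rename_i hk
    rw [ContinuousLinearMap.proj_apply, Pi.single_apply]
    congr 1
    rw [Prod.mk.injEq, Fin.mk.injEq, Fin.mk.injEq]
    exact propext ⟨fun hh => by omega, fun hh => by omega⟩
  · rename_i hk
    rw [if_neg]
    · simp
    · rintro ⟨rfl, rfl⟩; exact hk h

def Dmap (N : ℕ) (μ ξ : ℕ → ℂ) (T : (Fin N × Fin N) → ℝ) :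
    ((Fin N × Fin N) → ℝ) →L[ℝ] ℂ :=
  (∑ k ∈ Finset.Icc 1 (N - 1), ∑ i ∈ Finset.Icc 1 k,
      (μ k - μ (k + 1)) • (Complex.ofRealCLM.comp (prj N k i)))
  + ∑ i ∈ Finset.Icc 1 (N - 1), ξ i • ∑ k ∈ Finset.Icc 1 (N - i),
      (Real.exp (tv N T (k + i) k - tv N T (k + i - 1) k) : ℂ) •
        (Complex.ofRealCLM.comp (prj N (k + i) k - prj N (k + i - 1) k))

lemma ofRealCLM_comp_smul {E : Type*} [NormedAddCommGroup E] [NormedSpace ℝ E]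
    (r : ℝ) (L : E →L[ℝ] ℝ) :
    Complex.ofRealCLM.comp (r • L) = (r : ℂ) • (Complex.ofRealCLM.comp L) := by
  ext v
  simp [Complex.ofReal_mul]

lemma hasFDerivAt_psiL (N : ℕ) (μ ξ : ℕ → ℂ) (T : (Fin N × Fin N) → ℝ) :
    HasFDerivAt (psiL N μ ξ) (psiL N μ ξ T • Dmap N μ ξ T) T := by
  have hpsi : psiL N μ ξ = fun T => Complex.exp
      (∑ k ∈ Finset.Icc 1 (N - 1), ∑ i ∈ Finset.Icc 1 k,
          (μ k - μ (k + 1)) * ((prj N k i T : ℝ) : ℂ)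
        + ∑ i ∈ Finset.Icc 1 (N - 1), ξ i *
          ∑ k ∈ Finset.Icc 1 (N - i),
            ((Real.exp (prj N (k + i) k T - prj N (k + i - 1) k T) : ℝ) : ℂ)) := by
    funext T
    simp only [psiL, tv_eq_prj]
  have harg : HasFDerivAt (fun T : (Fin N × Fin N) → ℝ =>
      (∑ k ∈ Finset.Icc 1 (N - 1), ∑ i ∈ Finset.Icc 1 k,
          (μ k - μ (k + 1)) * ((prj N k i T : ℝ) : ℂ)
        + ∑ i ∈ Finset.Icc 1 (N - 1), ξ i *
          ∑ k ∈ Finset.Icc 1 (N - i),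
            ((Real.exp (prj N (k + i) k T - prj N (k + i - 1) k T) : ℝ) : ℂ)))
      ((∑ k ∈ Finset.Icc 1 (N - 1), ∑ i ∈ Finset.Icc 1 k,
          (μ k - μ (k + 1)) • (Complex.ofRealCLM.comp (prj N k i)))
        + ∑ i ∈ Finset.Icc 1 (N - 1), ξ i • ∑ k ∈ Finset.Icc 1 (N - i),
            (Real.exp (tv N T (k + i) k - tv N T (k + i - 1) k) : ℂ) •
              (Complex.ofRealCLM.comp (prj N (k + i) k - prj N (k + i - 1) k))) T := by
    apply HasFDerivAt.add
    · apply HasFDerivAt.fun_sum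
      intro k _
      apply HasFDerivAt.fun_sum
      intro i _
      exact ((Complex.ofRealCLM.comp (prj N k i)).hasFDerivAt).const_mul _
    · apply HasFDerivAt.fun_sum
      intro i _
      have hsum : HasFDerivAt (fun T : (Fin N × Fin N) → ℝ =>
          ∑ k ∈ Finset.Icc 1 (N - i),
            ((Real.exp (prj N (k + i) k T - prj N (k + i - 1) k T) : ℝ) : ℂ))
          (∑ k ∈ Finset.Icc 1 (N - i),
            (Real.exp (tv N T (k + i) k - tv N T (k + i - 1) k) : ℂ) •
              (Complex.ofRealCLM.comp (prj N (k + i) k - prj N (k + i - 1) k))) T := by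
        apply HasFDerivAt.fun_sum
        intro k _
        set L := prj N (k + i) k - prj N (k + i - 1) k with hLdef
        have hL : HasFDerivAt (fun T : (Fin N × Fin N) → ℝ =>
            prj N (k + i) k T - prj N (k + i - 1) k T) L T := L.hasFDerivAt
        have hE := hL.exp
        have hC := (Complex.ofRealCLM.hasFDerivAt).comp T hE
        rw [ofRealCLM_comp_smul] at hC
        have hv : prj N (k + i) k T - prj N (k + i - 1) k T
            = tv N T (k + i) k - tv N T (k + i - 1) k := by
          rw [tv_eq_prj, tv_eq_prj]
        rw [hv] at hC
        exact hC
      exact hsum.const_mul _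
  rw [hpsi]
  have := harg.cexp
  rw [← hpsi] at this
  convert this using 2
  all_goals try rfl
  rw [hpsi]

lemma pd_of_invalid (N : ℕ) (f : ((Fin N × Fin N) → ℝ) → ℂ) {k i : ℕ}
    (h : ¬ (1 ≤ i ∧ i ≤ k ∧ k ≤ N - 1)) (T : (Fin N × Fin N) → ℝ) :
    pd N f k i T = 0 := by
  rw [pd, dif_neg h]

lemma Dmap_single (N : ℕ) (μ ξ : ℕ → ℂ) (T : (Fin N × Fin N) → ℝ) {s j : ℕ}
    (h : 1 ≤ j ∧ j ≤ s ∧ s ≤ N - 1) :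
    Dmap N μ ξ T (Pi.single ((⟨s - 1, by omega⟩ : Fin N), (⟨j - 1, by omega⟩ : Fin N)) 1)
      = (μ s - μ (s + 1))
        + ((if j < s then ξ (s - j) * (Real.exp (tv N T s j - tv N T (s - 1) j) : ℂ) else 0)
          - ξ (s - j + 1) * (Real.exp (tv N T (s + 1) j - tv N T s j) : ℂ)) := by
  rw [Dmap]
  rw [ContinuousLinearMap.add_apply]
  congr 1
  · -- linear part
    rw [ContinuousLinearMap.sum_apply]
    rw [Finset.sum_eq_single s]
    · rw [ContinuousLinearMap.sum_apply, Finset.sum_eq_single j]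
      · simp only [ContinuousLinearMap.smul_apply, ContinuousLinearMap.comp_apply,
          prj_single N h, Complex.ofRealCLM_apply]
        simp
      · intro b _ hb
        simp only [ContinuousLinearMap.smul_apply, ContinuousLinearMap.comp_apply,
          prj_single N h, Complex.ofRealCLM_apply]
        rw [if_neg (by tauto)]
        simp
      · intro hj
        exfalso; apply hj
        simp only [Finset.mem_Icc]; omega
    · intro b _ hb
      rw [ContinuousLinearMap.sum_apply, Finset.sum_eq_zero]
      intro c _
      simp only [ContinuousLinearMap.smul_apply, ContinuousLinearMap.comp_apply,
        prj_single N h, Complex.ofRealCLM_apply]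
      rw [if_neg (by tauto)]
      simp
    · intro hs
      exfalso; apply hs
      simp only [Finset.mem_Icc]; omega
  · -- exponential part
    rw [ContinuousLinearMap.sum_apply]
    have expand : ∀ i k : ℕ,
        ((Real.exp (tv N T (k + i) k - tv N T (k + i - 1) k) : ℂ) •
          (Complex.ofRealCLM.comp (prj N (k + i) k - prj N (k + i - 1) k)))
            (Pi.single ((⟨s - 1, by omega⟩ : Fin N), (⟨j - 1, by omega⟩ : Fin N)) 1)
        = (Real.exp (tv N T (k + i) k - tv N T (k + i - 1) k) : ℂ) *
            (((if k + i = s ∧ k = j then (1:ℝ) else 0) : ℝ) - ((if k + i - 1 = s ∧ k = j then (1:ℝ) else 0) : ℝ)) := by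
      intro i k
      simp only [ContinuousLinearMap.smul_apply, ContinuousLinearMap.comp_apply,
        ContinuousLinearMap.sub_apply, prj_single N h, Complex.ofRealCLM_apply, smul_eq_mul]
      push_cast
      ring
    have step1 : ∀ i ∈ Finset.Icc 1 (N - 1),
        ξ i • ((∑ k ∈ Finset.Icc 1 (N - i),
          (Real.exp (tv N T (k + i) k - tv N T (k + i - 1) k) : ℂ) •
            (Complex.ofRealCLM.comp (prj N (k + i) k - prj N (k + i - 1) k)))
          (Pi.single ((⟨s - 1, by omega⟩ : Fin N), (⟨j - 1, by omega⟩ : Fin N)) 1))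
        = (if i = s - j ∧ j < s then ξ i * (Real.exp (tv N T s j - tv N T (s - 1) j) : ℂ) else 0)
          - (if i = s - j + 1 then ξ i * (Real.exp (tv N T (s + 1) j - tv N T s j) : ℂ) else 0) := by
      intro i hi
      simp only [Finset.mem_Icc] at hi
      rw [ContinuousLinearMap.sum_apply, smul_eq_mul]
      rw [Finset.sum_congr rfl (fun k _ => expand i k)]
      have hA : ∑ k ∈ Finset.Icc 1 (N - i),
          (Real.exp (tv N T (k + i) k - tv N T (k + i - 1) k) : ℂ) *
            (((if k + i = s ∧ k = j then (1:ℝ) else 0) : ℝ) - ((if k + i - 1 = s ∧ k = j then (1:ℝ) else 0) : ℝ))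
          = (if i = s - j ∧ j < s then (Real.exp (tv N T s j - tv N T (s - 1) j) : ℂ) else 0)
            - (if i = s - j + 1 then (Real.exp (tv N T (s + 1) j - tv N T s j) : ℂ) else 0) := by
        have split : ∀ k ∈ Finset.Icc 1 (N - i),
            (Real.exp (tv N T (k + i) k - tv N T (k + i - 1) k) : ℂ) *
              (((if k + i = s ∧ k = j then (1:ℝ) else 0) : ℝ) - ((if k + i - 1 = s ∧ k = j then (1:ℝ) else 0) : ℝ))
            = (if k + i = s ∧ k = j then (Real.exp (tv N T (k + i) k - tv N T (k + i - 1) k) : ℂ) else 0)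
              - (if k + i - 1 = s ∧ k = j then (Real.exp (tv N T (k + i) k - tv N T (k + i - 1) k) : ℂ) else 0) := by
          intro k _
          split_ifs <;> push_cast <;> ring
        rw [Finset.sum_congr rfl split, Finset.sum_sub_distrib]
        congr 1
        · by_cases hc : i = s - j ∧ j < s
          · obtain ⟨hc1, hc2⟩ := hc
            subst hc1
            rw [if_pos ⟨rfl, hc2⟩]
            rw [Finset.sum_eq_single j]
            · rw [if_pos ⟨by omega, rfl⟩]
              have e1 : j + (s - j) = s := by omega
              rw [e1]
            · intro b hb hbj
              simp only [Finset.mem_Icc] at hb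
              rw [if_neg (by omega)]
            · intro hj
              simp only [Finset.mem_Icc] at hj
              omega
          · rw [if_neg hc, Finset.sum_eq_zero]
            intro k hk
            simp only [Finset.mem_Icc] at hk
            rw [if_neg (by omega)]
        · by_cases hc : i = s - j + 1
          · subst hc
            rw [if_pos rfl]
            rw [Finset.sum_eq_single j]
            · rw [if_pos ⟨by omega, rfl⟩]
              have e2 : j + (s - j + 1) = s + 1 := by omega
              rw [e2, Nat.add_sub_cancel]
            · intro b hb hbj
              simp only [Finset.mem_Icc] at hb
              rw [if_neg (by omega)]
            · intro hj
              simp only [Finset.mem_Icc] at hj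
              omega
          · rw [if_neg hc, Finset.sum_eq_zero]
            intro k hk
            simp only [Finset.mem_Icc] at hk
            rw [if_neg (by omega)]
      rw [hA, mul_sub, mul_ite, mul_zero, mul_ite, mul_zero]
    simp only [ContinuousLinearMap.smul_apply]
    rw [Finset.sum_congr rfl step1, Finset.sum_sub_distrib]
    congr 1
    · rw [Finset.sum_eq_single (s - j)]
      · by_cases hjs : j < s
        · rw [if_pos ⟨rfl, hjs⟩, if_pos hjs]
        · rw [if_neg (by tauto), if_neg (by omega)]
      · intro b _ hb
        rw [if_neg (by tauto)]
      · intro hsj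
        simp only [Finset.mem_Icc] at hsj
        rw [if_neg (by omega)]
    · rw [Finset.sum_eq_single (s - j + 1)]
      · rw [if_pos rfl]
      · intro b _ hb
        rw [if_neg hb]
      · intro hsj
        exfalso; apply hsj
        simp only [Finset.mem_Icc]; omega

lemma pd_psiL (N : ℕ) (μ ξ : ℕ → ℂ) (T : (Fin N × Fin N) → ℝ) {s j : ℕ}
    (h : 1 ≤ j ∧ j ≤ s ∧ s ≤ N - 1) :
    pd N (psiL N μ ξ) s j T = psiL N μ ξ T *
      ((μ s - μ (s + 1))
        + ((if j < s then ξ (s - j) * (Real.exp (tv N T s j - tv N T (s - 1) j) : ℂ) else 0)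
          - ξ (s - j + 1) * (Real.exp (tv N T (s + 1) j - tv N T s j) : ℂ))) := by
  rw [pd, dif_pos h, (hasFDerivAt_psiL N μ ξ T).fderiv, ContinuousLinearMap.smul_apply,
    Dmap_single N μ ξ T h, smul_eq_mul]

lemma telescope (f : ℕ → ℂ) : ∀ b a, a ≤ b + 1 →
    ∑ s ∈ Finset.Icc a b, (f s - f (s + 1)) = f a - f (b + 1) := by
  intro b
  induction b with
  | zero =>
    intro a ha
    interval_cases a
    · simp
    · simp [Finset.Icc_eq_empty_of_lt]
  | succ b ih =>
    intro a ha
    rcases Nat.lt_or_ge a (b + 2) with h' | h'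
    · rw [Finset.sum_Icc_succ_top (by omega), ih a (by omega)]
      ring
    · rw [Finset.Icc_eq_empty (by omega)]
      have : a = b + 2 := by omega
      subst this
      simp

def gg (N : ℕ) (ξ : ℕ → ℂ) (T : (Fin N × Fin N) → ℝ) (j s : ℕ) : ℂ :=
  if j < s then ξ (s - j) * (Real.exp (tv N T s j - tv N T (s - 1) j) : ℂ) else 0

lemma pd_psiL' (N : ℕ) (μ ξ : ℕ → ℂ) (T : (Fin N × Fin N) → ℝ) {s j : ℕ}
    (h : 1 ≤ j ∧ j ≤ s ∧ s ≤ N - 1) :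
    pd N (psiL N μ ξ) s j T = psiL N μ ξ T *
      ((μ s - μ (s + 1)) + (gg N ξ T j s - gg N ξ T j (s + 1))) := by
  rw [pd_psiL N μ ξ T h]
  simp only [gg]
  rw [if_pos (by omega : j < s + 1)]
  have e1 : s + 1 - j = s - j + 1 := by omega
  rw [e1, Nat.add_sub_cancel]

lemma sum_pd (N : ℕ) (μ ξ : ℕ → ℂ) (T : (Fin N × Fin N) → ℝ) (j k : ℕ)
    (hj : 1 ≤ j) (hjk : j ≤ k + 1) (hk : k ≤ N - 1) :
    ∑ s ∈ Finset.Icc j k, pd N (psiL N μ ξ) s j T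
      = psiL N μ ξ T * ((∑ s ∈ Finset.Icc j k, (μ s - μ (s + 1))) - gg N ξ T j (k + 1)) := by
  have hcong : ∀ s ∈ Finset.Icc j k, pd N (psiL N μ ξ) s j T
      = psiL N μ ξ T * ((μ s - μ (s + 1)) + (gg N ξ T j s - gg N ξ T j (s + 1))) := by
    intro s hs
    simp only [Finset.mem_Icc] at hs
    exact pd_psiL' N μ ξ T ⟨hj, hs.1, by omega⟩
  rw [Finset.sum_congr rfl hcong, ← Finset.mul_sum]
  congr 1
  rw [Finset.sum_add_distrib, telescope (gg N ξ T j) k j hjk]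
  have : gg N ξ T j j = 0 := by rw [gg, if_neg (lt_irrefl j)]
  rw [this]
  ring

/-- `ψ_L` is a Whittaker vector for the Gauss–Givental lowering operators:
`E_{i+1,i} ψ_L = ξ_L^{(N−i)} ψ_L` for `i = 1, …, N−1`. -/
theorem whittaker_vector_left (N : ℕ) (hN : 2 ≤ N) (μ : ℕ → ℂ) (ξ : ℕ → ℂ)
    (i : ℕ) (hi1 : 1 ≤ i) (hi2 : i ≤ N - 1) (T : (Fin N × Fin N) → ℝ) :
    El N μ i (psiL N μ ξ) T = ξ (N - i) * psiL N μ ξ T := by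
  set ψ := psiL N μ ξ T with hψ
  set hh : ℕ → ℂ := fun m =>
    if i < m then ξ (m - i) * (Real.exp (tv N T m i - tv N T m (i + 1)) : ℂ) else 0 with hhh
  have key : ∀ k ∈ Finset.Icc i (N - 1),
      (Real.exp (tv N T k i - tv N T (k + 1) (i + 1)) : ℂ) *
        ((μ i - μ (i + 1)) * ψ + ∑ s ∈ Finset.Icc i k,
          (pd N (psiL N μ ξ) s (i + 1) T - pd N (psiL N μ ξ) s i T))
      = ψ * (hh (k + 1) - hh k) := by
    intro k hk
    simp only [Finset.mem_Icc] at hk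
    have hdrop : ∑ s ∈ Finset.Icc i k, pd N (psiL N μ ξ) s (i + 1) T
        = ∑ s ∈ Finset.Icc (i + 1) k, pd N (psiL N μ ξ) s (i + 1) T := by
      rw [← Finset.Ioc_insert_left hk.1, Finset.sum_insert Finset.left_notMem_Ioc,
        pd_of_invalid N _ (by omega), zero_add, Finset.Icc_add_one_left_eq_Ioc]
    have hmu : ∑ s ∈ Finset.Icc i k, (μ s - μ (s + 1))
        = (μ i - μ (i + 1)) + ∑ s ∈ Finset.Icc (i + 1) k, (μ s - μ (s + 1)) := by
      rw [← Finset.Ioc_insert_left hk.1, Finset.sum_insert Finset.left_notMem_Ioc,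
        Finset.Icc_add_one_left_eq_Ioc]
    have inner_eq : ∑ s ∈ Finset.Icc i k,
        (pd N (psiL N μ ξ) s (i + 1) T - pd N (psiL N μ ξ) s i T)
        = ψ * (gg N ξ T i (k + 1) - gg N ξ T (i + 1) (k + 1)) - (μ i - μ (i + 1)) * ψ := by
      rw [Finset.sum_sub_distrib, hdrop,
        sum_pd N μ ξ T (i + 1) k (by omega) (by omega) hk.2,
        sum_pd N μ ξ T i k hi1 (by omega) hk.2, hmu]
      ring
    rw [inner_eq]
    have hgg1 : (Real.exp (tv N T k i - tv N T (k + 1) (i + 1)) : ℂ) * gg N ξ T i (k + 1)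
        = hh (k + 1) := by
      rw [gg, hhh, if_pos (by omega : i < k + 1)]
      simp only
      rw [if_pos (by omega : i < k + 1), Nat.add_sub_cancel, mul_left_comm]
      congr 1
      rw [← Complex.ofReal_mul, ← Real.exp_add]
      congr 2
      ring
    have hgg2 : (Real.exp (tv N T k i - tv N T (k + 1) (i + 1)) : ℂ) * gg N ξ T (i + 1) (k + 1)
        = hh k := by
      rw [gg, hhh]
      simp only
      by_cases hik : i < k
      · rw [if_pos (by omega : i + 1 < k + 1), if_pos hik, Nat.add_sub_cancel, mul_left_comm]
        have e1 : k + 1 - (i + 1) = k - i := by omega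
        rw [e1]
        congr 1
        rw [← Complex.ofReal_mul, ← Real.exp_add]
        congr 2
        ring
      · rw [if_neg (by omega), if_neg (by omega), mul_zero]
    linear_combination ψ * hgg1 - ψ * hgg2
  rw [El, Finset.sum_congr rfl key]
  have hneg : ∀ k ∈ Finset.Icc i (N - 1), ψ * (hh (k + 1) - hh k)
      = -(ψ * hh k - ψ * hh (k + 1)) := by
    intro k _
    ring
  rw [Finset.sum_congr rfl hneg, Finset.sum_neg_distrib,
    telescope (fun m => ψ * hh m) (N - 1) i (by omega)]
  have hN1 : N - 1 + 1 = N := by omega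
  rw [hN1]
  have h0 : hh i = 0 := by rw [hhh]; simp
  have hNv : hh N = ξ (N - i) := by
    rw [hhh]
    simp only
    rw [if_pos (by omega : i < N)]
    have t1 : tv N T N i = 0 := by rw [tv, dif_neg (by omega)]
    have t2 : tv N T N (i + 1) = 0 := by rw [tv, dif_neg (by omega)]
    rw [t1, t2, sub_zero, Real.exp_zero]
    simp
  rw [h0, hNv]
  ring
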